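/- (Quasi-order comparison) Let G be a finite bipartite graph and v, w two vertices. Write φ(G - w; x) = Σ_k (-1)^k b_{2k} x^{n-1-2k} and φ(G - v; x) = Σ_k (-1)^k c_{2k} x^{n-1-2k} with all b_{2k}, c_{2k} ≥ 0. If b_{2k} ≥ c_{2k} for all k, then E_G(w) ≤ E_G(v). -/

import Mathlib

open Matrix BigOperators Finset Polynomial

noncomputable def adjMat {V : Type*} [Fintype V] (G : SimpleGraph V) : Matrix V V ℝ :=
  letI := Classical.decRel G.Adj; G.adjMatrix ℝ

noncomputable def absMat {V : Type*} [Fintype V] [DecidableEq V] (A : Matrix V V ℝ) :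
    Matrix V V ℝ :=
  letI hA := (Matrix.posSemidef_self_mul_conjTranspose A).1
  (hA.eigenvectorUnitary : Matrix V V ℝ) * diagonal (Real.sqrt ∘ hA.eigenvalues) *
    star (hA.eigenvectorUnitary : Matrix V V ℝ)

/-- The energy of a vertex: the (i,i) entry of |A| = (A Aᴴ)^{1/2}. -/
noncomputable def vertexEnergy {V : Type*} [Fintype V] [DecidableEq V]
    (G : SimpleGraph V) (i : V) : ℝ :=
  absMat (adjMat G) i i


section spec
variable {V : Type*} [Fintype V] [DecidableEq V] {M : Matrix V V ℝ} (hM : M.PosSemidef)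

lemma diag_entry (d : V → ℝ) (u : V) :
    ((hM.1.eigenvectorUnitary : Matrix V V ℝ) * diagonal d *
      (star hM.1.eigenvectorUnitary : Matrix V V ℝ)) u u
      = ∑ i, d i * ((hM.1.eigenvectorUnitary : Matrix V V ℝ) u i) ^ 2 := by
  simp only [Matrix.mul_apply, Matrix.diagonal_apply, Matrix.star_apply, star_trivial,
    mul_ite, ite_mul, mul_zero, zero_mul, Finset.sum_ite_eq, Finset.sum_ite_eq',
    Finset.mem_univ, if_true]
  refine Finset.sum_congr rfl fun i _ => ?_
  ring

lemma sqrt_entry (u : V) :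
    ((hM.1.eigenvectorUnitary : Matrix V V ℝ) * diagonal (Real.sqrt ∘ hM.1.eigenvalues) *
      star (hM.1.eigenvectorUnitary : Matrix V V ℝ)) u u = ∑ i, Real.sqrt (hM.1.eigenvalues i) *
      ((hM.1.eigenvectorUnitary : Matrix V V ℝ) u i) ^ 2 := by
  refine (diag_entry hM _ u).trans ?_
  rfl

lemma weights_sum_one (u : V) :
    ∑ i, ((hM.1.eigenvectorUnitary : Matrix V V ℝ) u i) ^ 2 = 1 := by
  have h := diag_entry hM (fun _ => (1:ℝ)) u
  simp only [Matrix.diagonal_one, Matrix.mul_one, one_mul] at h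
  rw [(Matrix.mem_unitaryGroup_iff).mp hM.1.eigenvectorUnitary.2] at h
  simpa using h.symm

lemma spectral_decomp_shift (y : ℝ) :
    M + y ^ 2 • (1 : Matrix V V ℝ) = (hM.1.eigenvectorUnitary : Matrix V V ℝ) *
      diagonal (fun i => hM.1.eigenvalues i + y ^ 2) *
      (star hM.1.eigenvectorUnitary : Matrix V V ℝ) := by
  conv_lhs => rw [hM.1.spectral_theorem,
    ← (Matrix.mem_unitaryGroup_iff).mp hM.1.eigenvectorUnitary.2]
  have : diagonal (fun i => hM.1.eigenvalues i + y ^ 2)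
      = diagonal (RCLike.ofReal ∘ hM.1.eigenvalues) + y ^ 2 • 1 := by
    rw [← Matrix.diagonal_one, ← Matrix.diagonal_smul, Matrix.diagonal_add]
    simp [Function.comp]
  rw [this]
  rw [Matrix.mul_add, Matrix.add_mul]
  congr 1
  rw [Matrix.mul_smul, Matrix.smul_mul, Matrix.mul_one]

lemma inv_entry {y : ℝ} (hy : 0 < y) (u : V) :
    (M + y ^ 2 • (1 : Matrix V V ℝ))⁻¹ u u
      = ∑ i, (hM.1.eigenvalues i + y ^ 2)⁻¹ *
        ((hM.1.eigenvectorUnitary : Matrix V V ℝ) u i) ^ 2 := by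
  have hne : ∀ i, hM.1.eigenvalues i + y ^ 2 ≠ 0 := fun i =>
    (add_pos_of_nonneg_of_pos (hM.eigenvalues_nonneg i) (pow_pos hy 2)).ne'
  have hinv : (M + y ^ 2 • (1 : Matrix V V ℝ))⁻¹
      = (hM.1.eigenvectorUnitary : Matrix V V ℝ) *
        diagonal (fun i => (hM.1.eigenvalues i + y ^ 2)⁻¹) *
        (star hM.1.eigenvectorUnitary : Matrix V V ℝ) := by
    apply Matrix.inv_eq_right_inv
    rw [spectral_decomp_shift hM y]
    have hsU : (star hM.1.eigenvectorUnitary : Matrix V V ℝ) *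
        (hM.1.eigenvectorUnitary : Matrix V V ℝ) = 1 :=
      Matrix.UnitaryGroup.star_mul_self _
    have hUs : (hM.1.eigenvectorUnitary : Matrix V V ℝ) *
        (star hM.1.eigenvectorUnitary : Matrix V V ℝ) = 1 :=
      (Matrix.mem_unitaryGroup_iff).mp hM.1.eigenvectorUnitary.2
    simp only [Matrix.mul_assoc]
    rw [← Matrix.mul_assoc (star (hM.1.eigenvectorUnitary : Matrix V V ℝ))
      (hM.1.eigenvectorUnitary : Matrix V V ℝ), hsU, Matrix.one_mul,
      ← Matrix.mul_assoc (diagonal _) (diagonal _), Matrix.diagonal_mul_diagonal]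
    simp only [mul_inv_cancel₀ (hne _), Matrix.diagonal_one, Matrix.one_mul, hUs]
  rw [hinv, diag_entry hM]
end spec

open MeasureTheory Real Set Filter in
lemma hasDeriv_res {μ : ℝ} (hμ : 0 < μ) (y : ℝ) :
    HasDerivAt (fun t => Real.sqrt μ * Real.arctan (t / Real.sqrt μ)) (μ / (μ + y ^ 2)) y := by
  have ha : (0:ℝ) < Real.sqrt μ := Real.sqrt_pos.mpr hμ
  have h1 : HasDerivAt (fun t : ℝ => t / Real.sqrt μ) (1 / Real.sqrt μ) y := by
    simpa using (hasDerivAt_id y).div_const (Real.sqrt μ)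
  have h2 := (Real.hasDerivAt_arctan (y / Real.sqrt μ)).comp y h1
  have h3 := h2.const_mul (Real.sqrt μ)
  refine h3.congr_deriv ?_
  have hsq : Real.sqrt μ ^ 2 = μ := Real.sq_sqrt hμ.le
  rw [div_pow, hsq]
  field_simp

open MeasureTheory Real Set Filter in
lemma integrable_res {μ : ℝ} (hμ : 0 ≤ μ) :
    IntegrableOn (fun y => μ / (μ + y ^ 2)) (Set.Ioi (0:ℝ)) := by
  rcases eq_or_lt_of_le hμ with h | h
  · simp [← h]
  · exact integrableOn_Ioi_deriv_of_nonneg' (fun x _ => hasDeriv_res h x)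
      (fun x _ => by positivity)
      (((Real.tendsto_arctan_atTop.mono_right nhdsWithin_le_nhds).comp
        (tendsto_id.atTop_div_const (Real.sqrt_pos.mpr h))).const_mul (Real.sqrt μ))

open MeasureTheory Real Set Filter in
lemma integral_res {μ : ℝ} (hμ : 0 ≤ μ) :
    ∫ y in Set.Ioi (0:ℝ), μ / (μ + y ^ 2) = π / 2 * Real.sqrt μ := by
  rcases eq_or_lt_of_le hμ with h | h
  · simp [← h]
  · rw [integral_Ioi_of_hasDerivAt_of_tendsto' (fun x _ => hasDeriv_res h x)
      (integrable_res hμ)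
      (((Real.tendsto_arctan_atTop.mono_right nhdsWithin_le_nhds).comp
        (tendsto_id.atTop_div_const (Real.sqrt_pos.mpr h))).const_mul (Real.sqrt μ))]
    simp [Function.comp, Real.arctan_zero]
    ring
lemma adjugate_diag' {n : ℕ} {R : Type*} [CommRing R] (B : Matrix (Fin (n+1)) (Fin (n+1)) R)
    (u : Fin (n+1)) :
    B.adjugate u u = (B.submatrix u.succAbove u.succAbove).det := by
  rw [Matrix.adjugate_apply, Matrix.det_succ_row _ u]
  rw [Finset.sum_eq_single u]
  · simp [Matrix.updateRow_self, Matrix.submatrix_updateRow_succAbove]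
  · intro j _ hj
    simp [Matrix.updateRow_self, Pi.single_apply, hj.symm]
  · simp

lemma eval_charpoly'' {m : Type*} {R : Type*} [CommRing R] [DecidableEq m] [Fintype m]
    (M : Matrix m m R) (r : R) :
    M.charpoly.eval r = (Matrix.diagonal (fun _ => r) - M).det := by
  rw [Matrix.charpoly, ← Polynomial.coe_evalRingHom, RingHom.map_det]
  congr 1
  ext i j
  by_cases h : i = j <;>
    simp [h, Matrix.charmatrix_apply, Matrix.diagonal_apply, Matrix.map_apply]

lemma inv_diag_entry' {n : ℕ} (X : Matrix (Fin (n+1)) (Fin (n+1)) ℂ) (u : Fin (n+1)) :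
    X⁻¹ u u = (X.det)⁻¹ * (X.submatrix u.succAbove u.succAbove).det := by
  rw [Matrix.inv_def, Ring.inverse_eq_inv, Matrix.smul_apply, adjugate_diag', smul_eq_mul]

lemma submatrix_sub_smul_one' {n : ℕ} (X : Matrix (Fin (n+1)) (Fin (n+1)) ℂ) (c : ℂ)
    (u : Fin (n+1)) :
    (X - c • 1).submatrix u.succAbove u.succAbove
      = X.submatrix u.succAbove u.succAbove - c • 1 := by
  ext i j
  by_cases h : i = j <;>
    simp [Matrix.submatrix_apply, Matrix.sub_apply, Matrix.smul_apply, Matrix.one_apply, h,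
      (Fin.succAbove_right_injective (p := u)).eq_iff]

lemma det_sub_smul_one' {m : Type*} [DecidableEq m] [Fintype m]
    (X : Matrix m m ℂ) (c : ℂ) :
    (X - c • 1).det = (-1) ^ (Fintype.card m) * X.charpoly.eval c := by
  rw [eval_charpoly'', ← Matrix.det_neg]
  congr 1
  rw [← Matrix.smul_one_eq_diagonal]
  abel

lemma eval_alt' {n : ℕ} (b : ℕ → ℝ) (d : ℝ) (e : ℂ) (he : e ^ 2 = -1) :
    Polynomial.eval (d * e)
      ((∑ k ∈ Finset.range (n / 2 + 1),
          Polynomial.C ((-1 : ℝ) ^ k * b k) * Polynomial.X ^ (n - 2 * k)).map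
        (algebraMap ℝ ℂ))
      = e ^ n * ((∑ k ∈ Finset.range (n / 2 + 1), b k * d ^ (n - 2 * k) : ℝ) : ℂ) := by
  rw [Polynomial.map_sum, Polynomial.eval_finset_sum]
  push_cast [Finset.mul_sum]
  refine Finset.sum_congr rfl fun k hk => ?_
  have h2k : 2 * k ≤ n := by
    have := Finset.mem_range.mp hk
    omega
  have he' : e ^ n = e ^ (n - 2 * k) * (((-1 : ℝ) ^ k : ℝ) : ℂ) := by
    push_cast
    rw [← he, ← pow_mul, ← pow_add]
    congr 1
    omega
  simp only [Polynomial.map_mul, Polynomial.map_C, Polynomial.map_pow, Polynomial.map_X,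
    Polynomial.eval_mul, Polynomial.eval_C, Polynomial.eval_pow, Polynomial.eval_X,
    Complex.coe_algebraMap]
  rw [mul_pow, he']
  generalize (n - 2 * k) = m
  push_cast
  ring

lemma keyC {n : ℕ} (A : Matrix (Fin (n+1)) (Fin (n+1)) ℝ) (hA : Aᴴ = A)
    (w v : Fin (n+1)) (b c : ℕ → ℝ)
    (hb : ∀ k, 0 ≤ b k) (hc : ∀ k, 0 ≤ c k)
    (hw : (A.submatrix w.succAbove w.succAbove).charpoly
        = ∑ k ∈ Finset.range (n / 2 + 1),
            Polynomial.C ((-1 : ℝ) ^ k * b k) * Polynomial.X ^ (n - 2 * k))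
    (hv : (A.submatrix v.succAbove v.succAbove).charpoly
        = ∑ k ∈ Finset.range (n / 2 + 1),
            Polynomial.C ((-1 : ℝ) ^ k * c k) * Polynomial.X ^ (n - 2 * k))
    (hbc : ∀ k, c k ≤ b k) {y : ℝ} (hy : 0 < y) :
    (A * Aᴴ + y ^ 2 • 1)⁻¹ v v ≤ (A * Aᴴ + y ^ 2 • 1)⁻¹ w w := by
  classical
  set f := algebraMap ℝ ℂ with hf
  set Z : Matrix (Fin (n+1)) (Fin (n+1)) ℂ := A.map f with hZ
  set cI : ℂ := (y : ℂ) * Complex.I with hcI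
  have hcI2 : cI * cI = -((y:ℂ)^2) := by
    rw [hcI]
    rw [mul_mul_mul_comm, Complex.I_mul_I]
    ring
  have hcI0 : cI ≠ 0 := by
    simp [hcI, Complex.I_ne_zero, Complex.ofReal_ne_zero, hy.ne']
  set B : Matrix (Fin (n+1)) (Fin (n+1)) ℝ := A * Aᴴ + y ^ 2 • 1 with hB
  have hBpd : B.PosDef := by
    refine Matrix.PosDef.posSemidef_add (Matrix.posSemidef_self_mul_conjTranspose A) ?_
    rw [Matrix.smul_one_eq_diagonal]
    exact Matrix.posDef_diagonal_iff.mpr fun i => by positivity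
  have hBdet : IsUnit B.det := isUnit_iff_ne_zero.mpr hBpd.det_pos.ne'
  have hdiag : ∀ u, 0 ≤ B⁻¹ u u := by
    intro u
    have h2 := hBpd.inv.posSemidef.2 (Finsupp.single u 1)
    simpa [Finsupp.sum_single_index]
      using h2
  -- complexification
  set Bc : Matrix (Fin (n+1)) (Fin (n+1)) ℂ := B.map f with hBc
  have hmap1 : (1 : Matrix (Fin (n+1)) (Fin (n+1)) ℝ).map f = 1 :=
    Matrix.map_one f (map_zero f) (map_one f)
  have hBcinv : Bc⁻¹ = B⁻¹.map f := by
    apply Matrix.inv_eq_right_inv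
    rw [hBc, ← Matrix.map_mul, Matrix.mul_nonsing_inv _ hBdet, hmap1]
  have hBc2 : Bc = Z * Z + ((y:ℂ)^2) • 1 := by
    rw [hBc, hB, hA, Matrix.map_add _ (map_add f), Matrix.map_mul]
    congr 1
    ext i j
    by_cases h : i = j <;> simp [Matrix.map_apply, Matrix.one_apply, h, hf]
  have hss : ∀ s : ℂ, (s • (1 : Matrix (Fin (n+1)) (Fin (n+1)) ℂ)) * (s • 1) = (s * s) • 1 := by
    intro s
    rw [Matrix.smul_mul, Matrix.mul_smul, smul_smul, Matrix.one_mul]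
  have expand : ∀ s : ℂ, (Z + s • 1) * (Z - s • 1) = Z * Z - (s * s) • 1 := by
    intro s
    rw [Matrix.add_mul, Matrix.mul_sub, Matrix.mul_sub, Matrix.smul_mul, Matrix.mul_smul,
      Matrix.mul_one, Matrix.one_mul, hss]
    abel
  have expand' : ∀ s : ℂ, (Z - s • 1) * (Z + s • 1) = Z * Z - (s * s) • 1 := by
    intro s
    rw [Matrix.sub_mul, Matrix.mul_add, Matrix.mul_add, Matrix.smul_mul, Matrix.mul_smul,
      Matrix.mul_one, Matrix.one_mul, hss]
    abel
  have hfact : Bc = (Z + cI • 1) * (Z - cI • 1) := by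
    rw [expand, hcI2, hBc2, neg_smul, sub_neg_eq_add]
  have hfact' : Bc = (Z - cI • 1) * (Z + cI • 1) := by
    rw [expand', hcI2, hBc2, neg_smul, sub_neg_eq_add]
  have hdetBc : Bc.det ≠ 0 := by
    rw [hBc, ← RingHom.mapMatrix_apply, ← RingHom.map_det]
    simpa [hf] using hBpd.det_pos.ne'
  have hdm : (Z - cI • 1).det ≠ 0 := by
    intro h
    apply hdetBc
    rw [hfact, Matrix.det_mul, h, mul_zero]
  have hdp : (Z + cI • 1).det ≠ 0 := by
    intro h
    apply hdetBc
    rw [hfact, Matrix.det_mul, h, zero_mul]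
  have hpart : Bc⁻¹ = (2 * cI)⁻¹ • ((Z - cI • 1)⁻¹ - (Z + cI • 1)⁻¹) := by
    apply Matrix.inv_eq_right_inv
    rw [Matrix.mul_smul, Matrix.mul_sub]
    rw [show Bc * (Z - cI • 1)⁻¹ = Z + cI • 1 by
      rw [hfact, Matrix.mul_assoc, Matrix.mul_nonsing_inv _ (isUnit_iff_ne_zero.mpr hdm),
        Matrix.mul_one]]
    rw [show Bc * (Z + cI • 1)⁻¹ = Z - cI • 1 by
      rw [hfact', Matrix.mul_assoc, Matrix.mul_nonsing_inv _ (isUnit_iff_ne_zero.mpr hdp),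
        Matrix.mul_one]]
    have : (Z + cI • 1) - (Z - cI • 1) = (2 * cI) • (1 : Matrix (Fin (n+1)) (Fin (n+1)) ℂ) := by
      rw [two_mul, add_smul]
      abel
    rw [this, smul_smul, inv_mul_cancel₀ (by simpa using hcI0), one_smul]
  -- entries of resolvents via charpolys
  have minor_eval : ∀ (u : Fin (n+1)) (bb : ℕ → ℝ),
      (A.submatrix u.succAbove u.succAbove).charpoly
        = ∑ k ∈ Finset.range (n / 2 + 1),
            Polynomial.C ((-1 : ℝ) ^ k * bb k) * Polynomial.X ^ (n - 2 * k) →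
      ∀ (e : ℂ), e ^ 2 = -1 →
      ((Z - ((y:ℂ) * e) • 1).submatrix u.succAbove u.succAbove).det
        = (-1) ^ n * (e ^ n *
            ((∑ k ∈ Finset.range (n / 2 + 1), bb k * y ^ (n - 2 * k) : ℝ) : ℂ)) := by
    intro u bb hcp e he
    rw [submatrix_sub_smul_one', hZ, Matrix.submatrix_map, det_sub_smul_one']
    rw [Matrix.charpoly_map, hcp]
    rw [eval_alt' bb y e he]
    simp [Fintype.card_fin]
  set By : ℝ := (∑ k ∈ Finset.range (n / 2 + 1), b k * y ^ (n - 2 * k) : ℝ) with hBy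
  set Cy : ℝ := (∑ k ∈ Finset.range (n / 2 + 1), c k * y ^ (n - 2 * k) : ℝ) with hCy
  set g : ℂ := (2 * cI)⁻¹ * ((-1 : ℂ)) ^ n *
      ((Z - cI • 1).det⁻¹ * Complex.I ^ n - (Z + cI • 1).det⁻¹ * (-Complex.I) ^ n) with hg
  have resolvent_entry : ∀ (u : Fin (n+1)) (bb : ℕ → ℝ),
      (A.submatrix u.succAbove u.succAbove).charpoly
        = ∑ k ∈ Finset.range (n / 2 + 1),
            Polynomial.C ((-1 : ℝ) ^ k * bb k) * Polynomial.X ^ (n - 2 * k) →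
      ((B⁻¹ u u : ℝ) : ℂ)
        = g * ((∑ k ∈ Finset.range (n / 2 + 1), bb k * y ^ (n - 2 * k) : ℝ) : ℂ) := by
    intro u bb hcp
    have hXm : (Z - cI • 1)⁻¹ u u
        = (Z - cI • 1).det⁻¹ * ((-1 : ℂ) ^ n * (Complex.I ^ n *
            ((∑ k ∈ Finset.range (n / 2 + 1), bb k * y ^ (n - 2 * k) : ℝ) : ℂ))) := by
      rw [inv_diag_entry']
      congr 1
      rw [hcI]
      exact minor_eval u bb hcp Complex.I Complex.I_sq
    have hplus : Z + cI • 1 = Z - ((y : ℂ) * (-Complex.I)) • 1 := by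
      rw [mul_neg, ← hcI, neg_smul, sub_neg_eq_add]
    have hXp : (Z + cI • 1)⁻¹ u u
        = (Z + cI • 1).det⁻¹ * ((-1 : ℂ) ^ n * ((-Complex.I) ^ n *
            ((∑ k ∈ Finset.range (n / 2 + 1), bb k * y ^ (n - 2 * k) : ℝ) : ℂ))) := by
      rw [inv_diag_entry']
      congr 1
      rw [hplus]
      exact minor_eval u bb hcp (-Complex.I) (by rw [neg_sq, Complex.I_sq])
    calc ((B⁻¹ u u : ℝ) : ℂ) = Bc⁻¹ u u := by
          rw [hBcinv, Matrix.map_apply, hf]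
          simp
      _ = (2 * cI)⁻¹ * ((Z - cI • 1)⁻¹ u u - (Z + cI • 1)⁻¹ u u) := by
          rw [hpart]
          simp [Matrix.smul_apply, Matrix.sub_apply, smul_eq_mul]
      _ = g * ((∑ k ∈ Finset.range (n / 2 + 1), bb k * y ^ (n - 2 * k) : ℝ) : ℂ) := by
          rw [hXm, hXp, hg]
          ring
  have hrw := resolvent_entry w b hw
  have hrv := resolvent_entry v c hv
  have hmul : B⁻¹ v v * By = B⁻¹ w w * Cy := by
    have h2 : ((B⁻¹ v v * By : ℝ) : ℂ) = ((B⁻¹ w w * Cy : ℝ) : ℂ) := by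
      push_cast
      rw [hrv, hrw]
      ring
    exact_mod_cast h2
  have hBy0 : 0 ≤ By := Finset.sum_nonneg fun k _ => mul_nonneg (hb k) (pow_nonneg hy.le _)
  have hBypos : 0 < By := by
    rcases lt_or_eq_of_le hBy0 with h | h
    · exact h
    · exfalso
      have hz := (Finset.sum_eq_zero_iff_of_nonneg
        (fun k _ => mul_nonneg (hb k) (pow_nonneg hy.le _))).mp h.symm
      have hb0 : ∀ k ∈ Finset.range (n / 2 + 1), b k = 0 := by
        intro k hk
        have := hz k hk
        exact (mul_eq_zero.mp this).resolve_right (pow_pos hy _).ne'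
      have hzero : (A.submatrix w.succAbove w.succAbove).charpoly = 0 := by
        rw [hw]
        refine Finset.sum_eq_zero fun k hk => ?_
        rw [hb0 k hk]
        simp
      exact (Matrix.charpoly_monic _).ne_zero hzero
  have hCyBy : Cy ≤ By :=
    Finset.sum_le_sum fun k _ => mul_le_mul_of_nonneg_right (hbc k) (pow_nonneg hy.le _)
  have h2 : B⁻¹ v v * By ≤ B⁻¹ w w * By := by
    rw [hmul]
    exact mul_le_mul_of_nonneg_left hCyBy (hdiag w)
  have := le_of_mul_le_mul_right h2 hBypos
  exact this

/-- quasi-order comparison: let G be bipartite on n+1 vertices, with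
φ(G-w;x) = Σ_k (-1)^k b_{2k} x^{n-2k} and φ(G-v;x) = Σ_k (-1)^k c_{2k} x^{n-2k},
b_{2k}, c_{2k} ≥ 0. If b_{2k} ≥ c_{2k} for all k then E_G(w) ≤ E_G(v). -/
theorem vertex_energy_quasiOrder {n : ℕ} (G : SimpleGraph (Fin (n + 1)))
    (hG : G.Colorable 2) (v w : Fin (n + 1)) (b c : ℕ → ℝ)
    (hb : ∀ k, 0 ≤ b k) (hc : ∀ k, 0 ≤ c k)
    (hw : ((adjMat G).submatrix w.succAbove w.succAbove).charpoly
        = ∑ k ∈ Finset.range (n / 2 + 1),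
            Polynomial.C ((-1 : ℝ) ^ k * b k) * Polynomial.X ^ (n - 2 * k))
    (hv : ((adjMat G).submatrix v.succAbove v.succAbove).charpoly
        = ∑ k ∈ Finset.range (n / 2 + 1),
            Polynomial.C ((-1 : ℝ) ^ k * c k) * Polynomial.X ^ (n - 2 * k))
    (hbc : ∀ k, c k ≤ b k) :
    vertexEnergy G w ≤ vertexEnergy G v := by
  classical
  set A : Matrix (Fin (n+1)) (Fin (n+1)) ℝ := adjMat G with hAdef
  have hA : Aᴴ = A := by
    ext i j
    simp only [Matrix.conjTranspose_apply, star_trivial, hAdef, adjMat]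
    simp [SimpleGraph.adjMatrix, G.adj_comm i j]
  set hM : (A * Aᴴ).PosSemidef := Matrix.posSemidef_self_mul_conjTranspose A with hMdef
  set U : Matrix (Fin (n+1)) (Fin (n+1)) ℝ :=
    (hM.1.eigenvectorUnitary : Matrix (Fin (n+1)) (Fin (n+1)) ℝ) with hU
  set μ : Fin (n+1) → ℝ := hM.1.eigenvalues with hμ
  have hμ0 : ∀ i, 0 ≤ μ i := fun i => hM.eigenvalues_nonneg i
  -- the integrand
  set F : Fin (n+1) → ℝ → ℝ :=
    fun u y => ∑ i, (μ i / (μ i + y ^ 2)) * (U u i) ^ 2 with hF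
  have hFint : ∀ u, MeasureTheory.IntegrableOn (F u) (Set.Ioi (0:ℝ)) := by
    intro u
    exact MeasureTheory.integrable_finset_sum _
      (fun i _ => (integrable_res (hμ0 i)).mul_const _)
  have hFval : ∀ u, ∫ y in Set.Ioi (0:ℝ), F u y = Real.pi / 2 * vertexEnergy G u := by
    intro u
    rw [hF]
    rw [MeasureTheory.integral_finset_sum _
      (fun i _ => (integrable_res (hμ0 i)).mul_const _)]
    have : ∀ i, ∫ y in Set.Ioi (0:ℝ), (μ i / (μ i + y ^ 2)) * (U u i) ^ 2
        = (Real.pi / 2 * Real.sqrt (μ i)) * (U u i) ^ 2 := by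
      intro i
      rw [MeasureTheory.integral_mul_const, integral_res (hμ0 i)]
    simp only [this]
    have hE : vertexEnergy G u = ∑ i, Real.sqrt (μ i) * (U u i) ^ 2 := sqrt_entry hM u
    rw [hE, Finset.mul_sum]
    refine Finset.sum_congr rfl fun i _ => ?_
    ring
  -- pointwise comparison
  have hpt : ∀ y ∈ Set.Ioi (0:ℝ), F w y ≤ F v y := by
    intro y hy
    have hy' : (0:ℝ) < y := hy
    have hform : ∀ u, F u y = 1 - y ^ 2 * ((A * Aᴴ + y ^ 2 • 1)⁻¹ u u) := by
      intro u
      rw [hF, inv_entry hM hy' u, Finset.mul_sum]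
      rw [← weights_sum_one hM u, ← Finset.sum_sub_distrib]
      refine Finset.sum_congr rfl fun i _ => ?_
      have hne : μ i + y ^ 2 ≠ 0 :=
        (add_pos_of_nonneg_of_pos (hμ0 i) (pow_pos hy' 2)).ne'
      have hsc : μ i / (μ i + y ^ 2) = 1 - y ^ 2 * (μ i + y ^ 2)⁻¹ := by
        field_simp
        ring
      rw [hsc]
      ring
    rw [hform w, hform v]
    have hkey := keyC A hA w v b c hb hc hw hv hbc hy'
    nlinarith [sq_nonneg y]
  have hmono : ∫ y in Set.Ioi (0:ℝ), F w y ≤ ∫ y in Set.Ioi (0:ℝ), F v y := by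
    refine MeasureTheory.setIntegral_mono_on (hFint w) (hFint v) measurableSet_Ioi hpt
  rw [hFval w, hFval v] at hmono
  have hπ : (0:ℝ) < Real.pi / 2 := by positivity
  exact le_of_mul_le_mul_left hmono hπ
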